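/- Let A and B be finite dimensional algebras over an algebraically closed field K. If M∈mod A and N∈mod B are reflexive modules (i.e., the natural evaluation maps M → M** and N → N** are isomorphisms, where (−)* = Hom into the regular module), then M⊗_K N is a reflexive (A⊗_K B)-module: the evaluation map M⊗N → (M⊗N)** is an isomorphism. (Step (3) of the proof of Proposition 3.1) -/

import Mathlib

/-!
Common definitions: modules over a finite dimensional algebra.

Following the conventions of the paper, "module" below means (finitely generated, when
so indicated) module; we work with left modules throughout (for an algebra `A`, the
category of right `A`-modules is equivalent to that of left `Aᵐᵒᵖ`-modules, so this is
only a change of convention).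
-/

open Function LinearMap TensorProduct

universe u

section Defs

variable (R : Type u) [Ring R]

/-- A submodule `N ≤ M` is superfluous (small) in `M` if `N ⊔ N' = ⊤` implies `N' = ⊤`. -/
def IsSuperfluousSubmodule {M : Type u} [AddCommGroup M] [Module R M]
    (N : Submodule R M) : Prop :=
  ∀ N' : Submodule R M, N ⊔ N' = ⊤ → N' = ⊤

/-- `M` is a Gorenstein projective `R`-module: there is a doubly infinite exact complex
`⋯ → P₋₁ → P₀ → P₁ → ⋯` of finitely generated projective `R`-modules which stays exact
after applying `Hom_R(-, R)`, such that `M ≅ Im (P₋₁ → P₀)`. -/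
def IsGorensteinProj (M : Type u) [AddCommGroup M] [Module R M] : Prop :=
  ∃ (P : ℤ → ModuleCat.{u} R) (d : ∀ i : ℤ, P i →ₗ[R] P (i + 1)),
    (∀ i, Module.Finite R (P i)) ∧ (∀ i, Module.Projective R (P i)) ∧
    (∀ i, Function.Exact (d i) (d (i + 1))) ∧
    (∀ i, Function.Exact
      (fun g : P (i + 1 + 1) →ₗ[R] R => g ∘ₗ d (i + 1))
      (fun g : P (i + 1) →ₗ[R] R => g ∘ₗ d i)) ∧
    Nonempty (M ≃ₗ[R] LinearMap.range (d (-1)))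

/-- `P₁ --f--> P₀ --g--> M → 0` is a minimal projective presentation of `M`:
`P₀ --g--> M` and `P₁ --f--> ker g` are projective covers. -/
def IsMinimalProjPresentation {M : Type u} [AddCommGroup M] [Module R M]
    {P₁ P₀ : ModuleCat.{u} R} (f : P₁ →ₗ[R] P₀) (g : P₀ →ₗ[R] M) : Prop :=
  Module.Finite R P₁ ∧ Module.Finite R P₀ ∧
  Module.Projective R P₁ ∧ Module.Projective R P₀ ∧
  Function.Surjective g ∧ IsSuperfluousSubmodule R (LinearMap.ker g) ∧
  LinearMap.range f = LinearMap.ker g ∧ IsSuperfluousSubmodule R (LinearMap.ker f)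

/-- `M` is τ-rigid: for a minimal projective presentation `P₁ --f--> P₀ → M → 0`,
the induced map `Hom(f, M) : Hom(P₀, M) → Hom(P₁, M)`, `k ↦ k ∘ f`, is surjective
(equivalently, `Hom_R(M, τM) = 0`). -/
def IsTauRigid (M : Type u) [AddCommGroup M] [Module R M] : Prop :=
  ∀ (P₁ P₀ : ModuleCat.{u} R) (f : P₁ →ₗ[R] P₀) (g : P₀ →ₗ[R] M),
    IsMinimalProjPresentation R f g →
      Function.Surjective (fun k : P₀ →ₗ[R] M => k ∘ₗ f)

/-- A nonzero module is indecomposable if it is not the direct sum of two nonzero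
submodules. -/
def IsIndecomposable (M : Type u) [AddCommGroup M] [Module R M] : Prop :=
  Nontrivial M ∧ ∀ N N' : Submodule R M, IsCompl N N' → N = ⊥ ∨ N' = ⊥

/-- `|M| = n`: `M` has exactly `n` pairwise non-isomorphic indecomposable direct
summands. -/
def HasIndecSummandCount (M : Type u) [AddCommGroup M] [Module R M] (n : ℕ) : Prop :=
  ∃ X : Fin n → Submodule R M,
    (∀ i, (∃ Y, IsCompl (X i) Y) ∧ IsIndecomposable R (X i)) ∧
    (∀ i j, i ≠ j → IsEmpty ((X i) ≃ₗ[R] (X j))) ∧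
    (∀ N : Submodule R M, (∃ Y, IsCompl N Y) → IsIndecomposable R N →
      ∃ i, Nonempty ((N : Type u) ≃ₗ[R] (X i : Type u)))

/-- `M` is τ-tilting if it is τ-rigid and `|M| = |R|`. -/
def IsTauTilting (M : Type u) [AddCommGroup M] [Module R M] : Prop :=
  IsTauRigid R M ∧ ∃ n : ℕ, HasIndecSummandCount R M n ∧ HasIndecSummandCount R R n

/-- The two-sided ideal generated by `x` in `R`, as a set: all finite sums
`∑ aᵢ * x * bᵢ`. -/
def twoSidedGen (x : R) : Set R :=
  {y | ∃ (n : ℕ) (a b : Fin n → R), y = ∑ i, a i * x * b i}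

/-- A witness that `M` is a support τ-tilting `R`-module: an idempotent `e ∈ R` and the
quotient `S = R/(e)` of `R` by the two-sided ideal generated by `e` (realized as a
surjective ring homomorphism `π : R → S` whose kernel is `(e)`), such that `M`, with an
`S`-module structure compatible with its `R`-module structure, is a τ-tilting
`S`-module. -/
structure SupportTauTiltingWitness (M : Type u) [AddCommGroup M] [Module R M] :
    Type (u + 1) where
  S : Type u
  [ringS : Ring S]
  π : R →+* S
  e : R
  idem : IsIdempotentElem e
  surj : Function.Surjective π
  ker_eq : ∀ x : R, π x = 0 ↔ x ∈ twoSidedGen R e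
  [modS : Module S M]
  compat : ∀ (r : R) (m : M), π r • m = r • m
  tauTilting : IsTauTilting S M

/-- `M` is a support τ-tilting `R`-module: there is an idempotent `e` of `R` such that
`M` is a τ-tilting `R/(e)`-module. -/
def IsSupportTauTilting (M : Type u) [AddCommGroup M] [Module R M] : Prop :=
  Nonempty (SupportTauTiltingWitness R M)

/-- `P• --ε--> M → 0` is a projective resolution of `M`. -/
def IsProjectiveResolution (M : Type u) [AddCommGroup M] [Module R M]
    (P : ℕ → ModuleCat.{u} R) (d : ∀ n : ℕ, P (n + 1) →ₗ[R] P n) (ε : P 0 →ₗ[R] M) :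
    Prop :=
  (∀ n, Module.Projective R (P n)) ∧ Function.Surjective ε ∧ Function.Exact (d 0) ε ∧
    ∀ n, Function.Exact (d (n + 1)) (d n)

/-- `M` is semi-Gorenstein projective, i.e. `Ext^i_R(M, R) = 0` for all `i ≥ 1`:
for a projective resolution `P•` of `M`, the complex
`Hom(P₀, R) → Hom(P₁, R) → ⋯` is exact at every position `≥ 1`. -/
def IsSemiGorensteinProj (M : Type u) [AddCommGroup M] [Module R M] : Prop :=
  ∀ (P : ℕ → ModuleCat.{u} R) (d : ∀ n : ℕ, P (n + 1) →ₗ[R] P n) (ε : P 0 →ₗ[R] M),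
    IsProjectiveResolution R M P d ε →
    ∀ n, Function.Exact (fun g : P n →ₗ[R] R => g ∘ₗ d n)
      (fun g : P (n + 1) →ₗ[R] R => g ∘ₗ d (n + 1))

/-- `M` has finite projective dimension: it has a projective resolution which
eventually vanishes. -/
def HasFiniteProjectiveDimension (M : Type u) [AddCommGroup M] [Module R M] : Prop :=
  ∃ (P : ℕ → ModuleCat.{u} R) (d : ∀ n : ℕ, P (n + 1) →ₗ[R] P n) (ε : P 0 →ₗ[R] M),
    IsProjectiveResolution R M P d ε ∧ ∃ N : ℕ, ∀ n, N ≤ n → Subsingleton (P n)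

/-- `M` has finite injective dimension: there is an exact coresolution
`0 → M → I⁰ → I¹ → ⋯` by injective modules which eventually vanishes. -/
def HasFiniteInjectiveDimension (M : Type u) [AddCommGroup M] [Module R M] : Prop :=
  ∃ (I : ℕ → ModuleCat.{u} R) (d : ∀ n : ℕ, I n →ₗ[R] I (n + 1)) (ε : M →ₗ[R] I 0),
    (∀ n, Module.Injective R (I n)) ∧ Function.Injective ε ∧ Function.Exact ε (d 0) ∧
    (∀ n, Function.Exact (d n) (d (n + 1))) ∧ ∃ N : ℕ, ∀ n, N ≤ n → Subsingleton (I n)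

/-- `R` is CM-finite: there are only finitely many isomorphism classes of
indecomposable finitely generated Gorenstein projective `R`-modules. -/
def IsCMFinite : Prop :=
  ∃ (n : ℕ) (X : Fin n → ModuleCat.{u} R),
    ∀ M : ModuleCat.{u} R, Module.Finite R M → IsIndecomposable R M →
      IsGorensteinProj R M → ∃ i, Nonempty (M ≃ₗ[R] X i)

/-- `R` is τ-tilting finite: there are only finitely many isomorphism classes of
indecomposable finitely generated τ-rigid `R`-modules. -/
def IsTauTiltingFinite : Prop :=
  ∃ (n : ℕ) (X : Fin n → ModuleCat.{u} R),
    ∀ M : ModuleCat.{u} R, Module.Finite R M → IsIndecomposable R M →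
      IsTauRigid R M → ∃ i, Nonempty (M ≃ₗ[R] X i)

/-- `R` is CM-τ-tilting finite: there are only finitely many isomorphism classes of
indecomposable finitely generated `R`-modules which are both Gorenstein projective and
τ-rigid. -/
def IsCMTauTiltingFinite : Prop :=
  ∃ (n : ℕ) (X : Fin n → ModuleCat.{u} R),
    ∀ M : ModuleCat.{u} R, Module.Finite R M → IsIndecomposable R M →
      IsGorensteinProj R M → IsTauRigid R M → ∃ i, Nonempty (M ≃ₗ[R] X i)

end Defs

section Dual

variable (R : Type u) [Ring R] (M : Type u) [AddCommGroup M] [Module R M]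

/-- The `R`-dual `M* = Hom_R(M, R)` of a (left) `R`-module `M` is a right `R`-module,
i.e. a module over `Rᵐᵒᵖ`; `M** = Hom_{Rᵐᵒᵖ}(M*, R)` is again a (left) `R`-module, and
the evaluation map `M → M**`, `m ↦ (φ ↦ φ m)`, is `R`-linear. -/
def dualEval : M →ₗ[R] ((M →ₗ[R] R) →ₗ[Rᵐᵒᵖ] R) where
  toFun m :=
    { toFun := fun φ => φ m
      map_add' := fun _ _ => rfl
      map_smul' := fun _ _ => rfl }
  map_add' m m' := LinearMap.ext fun φ => φ.map_add m m'
  map_smul' r m := LinearMap.ext fun φ => φ.map_smul r m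

end Dual

section TensorModule

variable (K : Type u) [CommRing K]
variable (A : Type u) [Ring A] [Algebra K A]
variable (B : Type u) [Ring B] [Algebra K B]
variable (M : Type u) [AddCommGroup M] [Module K M] [Module A M] [IsScalarTower K A M]
variable (N : Type u) [AddCommGroup N] [Module K N] [Module B N] [IsScalarTower K B N]

/-- The action of `B` on `M ⊗[K] N` through the right factor, as an algebra morphism
into the `K`-linear endomorphisms. -/
noncomputable def rightFactorAction : B →ₐ[K] Module.End K (M ⊗[K] N) where
  toFun b := LinearMap.lTensor M ((Algebra.lsmul K K N) b)
  map_one' := by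
    show LinearMap.lTensor M ((Algebra.lsmul K K N) 1) = _
    rw [map_one]
    exact LinearMap.lTensor_id M N
  map_mul' b b' := by
    show LinearMap.lTensor M ((Algebra.lsmul K K N) (b * b')) = _
    rw [map_mul]
    exact LinearMap.lTensor_comp M _ _
  map_zero' := by
    show LinearMap.lTensor M ((Algebra.lsmul K K N) 0) = 0
    rw [map_zero]
    ext m n
    simp
  map_add' b b' := by
    show LinearMap.lTensor M ((Algebra.lsmul K K N) (b + b')) = _
    rw [map_add]
    ext m n
    simp
  commutes' k := by
    ext m n
    show (m ⊗ₜ[K] ((algebraMap K B) k • n)) = _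
    rw [algebraMap_smul]
    simp [Module.algebraMap_end_apply, smul_tmul]

/-- The action of `A ⊗[K] B` on `M ⊗[K] N`, where `A` acts on the left factor and `B`
acts on the right factor, as an algebra morphism into `K`-linear endomorphisms. -/
noncomputable def tensorAction : (A ⊗[K] B) →ₐ[K] Module.End K (M ⊗[K] N) :=
  Algebra.TensorProduct.lift
    (Algebra.lsmul K K (M ⊗[K] N))
    (rightFactorAction K B M N)
    (by
      intro a b
      apply TensorProduct.ext'
      intro m n
      rw [Module.End.mul_apply, Module.End.mul_apply]
      show a • (m ⊗ₜ[K] (b • n)) = _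
      rw [TensorProduct.smul_tmul']
      rfl)

/-- The canonical `A ⊗[K] B`-module structure on `M ⊗[K] N` for an `A`-module `M` and a
`B`-module `N`; on pure tensors, `(a ⊗ b) • (m ⊗ n) = (a • m) ⊗ (b • n)`. -/
noncomputable def tensorModule : Module (A ⊗[K] B) (M ⊗[K] N) :=
  Module.compHom (M ⊗[K] N) (tensorAction K A B M N).toRingHom

end TensorModule

section Triangular

/-- The lower triangular `n × n` matrix algebra `T_n(A)` over `A`, as a subalgebra of
the full matrix algebra. -/
def Tn (K : Type u) [CommRing K] (A : Type u) [Ring A] [Algebra K A] (n : ℕ) :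
    Subalgebra K (Matrix (Fin n) (Fin n) A) where
  carrier := {M | ∀ i j : Fin n, i < j → M i j = 0}
  mul_mem' := by
    intro M N hM hN i j hij
    rw [Matrix.mul_apply]
    refine Finset.sum_eq_zero fun k _ => ?_
    rcases lt_or_ge i k with h | h
    · rw [hM i k h, zero_mul]
    · rw [hN k j (lt_of_le_of_lt h hij), mul_zero]
  add_mem' := by
    intro M N hM hN i j hij
    simp [Matrix.add_apply, hM i j hij, hN i j hij]
  one_mem' := fun i j hij => Matrix.one_apply_ne (ne_of_lt hij)
  zero_mem' := fun i j hij => rfl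
  algebraMap_mem' := by
    intro k i j hij
    rw [Matrix.algebraMap_matrix_apply, if_neg (ne_of_lt hij)]

theorem Tn_apply_eq_zero {K : Type u} [CommRing K] {A : Type u} [Ring A] [Algebra K A]
    {n : ℕ} (m : Tn K A n) {i j : Fin n} (h : i < j) :
    (m : Matrix (Fin n) (Fin n) A) i j = 0 := m.2 i j h

/-- The `T₂(A)`-module associated to a triple `(X, Y, f)` with `X`, `Y` `A`-modules and
`f : X →ₗ[A] Y`: the underlying group is `X × Y`, and a lower triangular matrix
`((a, 0), (c, d))` acts by `(x, y) ↦ (a • x, c • f x + d • y)`. -/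
noncomputable def T2Module (K : Type u) [CommRing K] (A : Type u) [Ring A] [Algebra K A]
    {X Y : Type u} [AddCommGroup X] [Module A X] [AddCommGroup Y] [Module A Y]
    (f : X →ₗ[A] Y) : Module (Tn K A 2) (X × Y) :=
  letI : SMul (Tn K A 2) (X × Y) :=
    ⟨fun m v => (((m : Matrix (Fin 2) (Fin 2) A) 0 0) • v.1,
      ((m : Matrix (Fin 2) (Fin 2) A) 1 0) • f v.1 +
        ((m : Matrix (Fin 2) (Fin 2) A) 1 1) • v.2)⟩
  Module.ofMinimalAxioms
    (fun m v w => by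
      apply Prod.ext
      · rw [Prod.fst_add]
        show ((m : Matrix (Fin 2) (Fin 2) A) 0 0) • (v.1 + w.1) =
          ((m : Matrix (Fin 2) (Fin 2) A) 0 0) • v.1 +
            ((m : Matrix (Fin 2) (Fin 2) A) 0 0) • w.1
        rw [smul_add]
      · rw [Prod.snd_add]
        show ((m : Matrix (Fin 2) (Fin 2) A) 1 0) • f (v.1 + w.1) +
            ((m : Matrix (Fin 2) (Fin 2) A) 1 1) • (v.2 + w.2) =
          (((m : Matrix (Fin 2) (Fin 2) A) 1 0) • f v.1 +
              ((m : Matrix (Fin 2) (Fin 2) A) 1 1) • v.2) +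
            (((m : Matrix (Fin 2) (Fin 2) A) 1 0) • f w.1 +
              ((m : Matrix (Fin 2) (Fin 2) A) 1 1) • w.2)
        rw [map_add, smul_add, smul_add]
        abel)
    (fun m m' v => by
      apply Prod.ext
      · rw [Prod.fst_add]
        show ((↑(m + m') : Matrix (Fin 2) (Fin 2) A) 0 0) • v.1 =
          ((↑m : Matrix (Fin 2) (Fin 2) A) 0 0) • v.1 +
            ((↑m' : Matrix (Fin 2) (Fin 2) A) 0 0) • v.1
        rw [Subalgebra.coe_add, Matrix.add_apply, add_smul]
      · rw [Prod.snd_add]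
        show ((↑(m + m') : Matrix (Fin 2) (Fin 2) A) 1 0) • f v.1 +
            ((↑(m + m') : Matrix (Fin 2) (Fin 2) A) 1 1) • v.2 =
          (((↑m : Matrix (Fin 2) (Fin 2) A) 1 0) • f v.1 +
              ((↑m : Matrix (Fin 2) (Fin 2) A) 1 1) • v.2) +
            (((↑m' : Matrix (Fin 2) (Fin 2) A) 1 0) • f v.1 +
              ((↑m' : Matrix (Fin 2) (Fin 2) A) 1 1) • v.2)
        rw [Subalgebra.coe_add, Matrix.add_apply, Matrix.add_apply, add_smul, add_smul]
        abel)
    (fun m m' v => by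
      apply Prod.ext
      · show ((↑(m * m') : Matrix (Fin 2) (Fin 2) A) 0 0) • v.1 =
          ((↑m : Matrix (Fin 2) (Fin 2) A) 0 0) •
            (((↑m' : Matrix (Fin 2) (Fin 2) A) 0 0) • v.1)
        rw [Subalgebra.coe_mul, Matrix.mul_apply, Fin.sum_univ_two,
          Tn_apply_eq_zero m (show (0 : Fin 2) < 1 by decide), zero_mul, add_zero, mul_smul]
      · show ((↑(m * m') : Matrix (Fin 2) (Fin 2) A) 1 0) • f v.1 +
            ((↑(m * m') : Matrix (Fin 2) (Fin 2) A) 1 1) • v.2 =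
          ((↑m : Matrix (Fin 2) (Fin 2) A) 1 0) •
              f (((↑m' : Matrix (Fin 2) (Fin 2) A) 0 0) • v.1) +
            ((↑m : Matrix (Fin 2) (Fin 2) A) 1 1) •
              (((↑m' : Matrix (Fin 2) (Fin 2) A) 1 0) • f v.1 +
                ((↑m' : Matrix (Fin 2) (Fin 2) A) 1 1) • v.2)
        rw [Subalgebra.coe_mul, Matrix.mul_apply, Matrix.mul_apply, Fin.sum_univ_two,
          Fin.sum_univ_two, Tn_apply_eq_zero m' (show (0 : Fin 2) < 1 by decide), mul_zero,
          zero_add, map_smul, add_smul, mul_smul, mul_smul, mul_smul, smul_add]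
        abel)
    (fun v => by
      apply Prod.ext
      · show ((↑(1 : Tn K A 2) : Matrix (Fin 2) (Fin 2) A) 0 0) • v.1 = v.1
        rw [Subalgebra.coe_one, Matrix.one_apply_eq, one_smul]
      · show ((↑(1 : Tn K A 2) : Matrix (Fin 2) (Fin 2) A) 1 0) • f v.1 +
            ((↑(1 : Tn K A 2) : Matrix (Fin 2) (Fin 2) A) 1 1) • v.2 = v.2
        rw [Subalgebra.coe_one, Matrix.one_apply_ne (show (1 : Fin 2) ≠ 0 by decide),
          Matrix.one_apply_eq, zero_smul, one_smul, zero_add])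

end Triangular


section Aux

variable (K : Type u) [Field K]
variable (A : Type u) [Ring A] [Algebra K A]
variable (B : Type u) [Ring B] [Algebra K B]
variable (M : Type u) [AddCommGroup M] [Module K M] [Module A M] [IsScalarTower K A M]
variable (N : Type u) [AddCommGroup N] [Module K N] [Module B N] [IsScalarTower K B N]

theorem tensorModule_smul_def (x : A ⊗[K] B) (t : M ⊗[K] N) :
    letI := tensorModule K A B M N
    x • t = tensorAction K A B M N x t := rfl

theorem tensorModule_smul_tmul (a : A) (b : B) (m : M) (n : N) :
    letI := tensorModule K A B M N
    (a ⊗ₜ[K] b) • (m ⊗ₜ[K] n) = (a • m) ⊗ₜ[K] (b • n) := by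
  letI := tensorModule K A B M N
  rw [tensorModule_smul_def]
  simp only [tensorAction]
  show (Algebra.lsmul K K (M ⊗[K] N) a * rightFactorAction K B M N b) (m ⊗ₜ[K] n) = _
  show (Algebra.lsmul K K (M ⊗[K] N) a) ((rightFactorAction K B M N b) (m ⊗ₜ[K] n)) = _
  show a • (LinearMap.lTensor M ((Algebra.lsmul K K N) b)) (m ⊗ₜ[K] n) = _
  rw [LinearMap.lTensor_tmul]
  show a • (m ⊗ₜ[K] (b • n)) = _
  rw [TensorProduct.smul_tmul']

theorem tensorModule_algebraMap_smul (k : K) (t : M ⊗[K] N) :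
    letI := tensorModule K A B M N
    (algebraMap K (A ⊗[K] B) k) • t = k • t := by
  letI := tensorModule K A B M N
  rw [tensorModule_smul_def]
  rw [AlgHom.commutes]
  simp [Module.algebraMap_end_apply]

/-- `Φ` on a pair: the `A ⊗ B`-linear map `M ⊗ N → A ⊗ B` induced by `f : M →ₗ[A] A`
and `g : N →ₗ[B] B`. -/
noncomputable def PhiAux (f : M →ₗ[A] A) (g : N →ₗ[B] B) :
    letI := tensorModule K A B M N
    (M ⊗[K] N) →ₗ[A ⊗[K] B] (A ⊗[K] B) :=
  letI := tensorModule K A B M N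
  { toFun := TensorProduct.map (f.restrictScalars K) (g.restrictScalars K)
    map_add' := map_add _
    map_smul' := by
      intro x t
      simp only [RingHom.id_apply]
      induction x using TensorProduct.induction_on with
      | zero =>
        rw [zero_smul, zero_smul, map_zero]
      | tmul a b =>
        induction t using TensorProduct.induction_on with
        | zero => rw [smul_zero, map_zero, smul_zero]
        | tmul m n =>
          rw [tensorModule_smul_tmul, TensorProduct.map_tmul, TensorProduct.map_tmul,
            smul_eq_mul, Algebra.TensorProduct.tmul_mul_tmul]
          simp only [LinearMap.coe_restrictScalars, LinearMap.map_smul_of_tower,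
            smul_eq_mul]
        | add t₁ t₂ h₁ h₂ =>
          rw [smul_add, map_add, map_add, h₁, h₂, smul_add]
      | add x₁ x₂ h₁ h₂ =>
        rw [add_smul, map_add, h₁, h₂, add_smul] }

theorem PhiAux_apply (f : M →ₗ[A] A) (g : N →ₗ[B] B) (t : M ⊗[K] N) :
    PhiAux K A B M N f g t =
      TensorProduct.map (f.restrictScalars K) (g.restrictScalars K) t := rfl

theorem PhiAux_tmul (f : M →ₗ[A] A) (g : N →ₗ[B] B) (m : M) (n : N) :
    PhiAux K A B M N f g (m ⊗ₜ[K] n) = f m ⊗ₜ[K] g n := rfl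

/-- The canonical map `M* ⊗[K] N* → Hom_{A⊗B}(M ⊗ N, A ⊗ B)`. -/
noncomputable def Phi :
    letI := tensorModule K A B M N
    (M →ₗ[A] A) ⊗[K] (N →ₗ[B] B) →ₗ[K]
      ((M ⊗[K] N) →ₗ[A ⊗[K] B] (A ⊗[K] B)) :=
  letI := tensorModule K A B M N
  TensorProduct.lift
    { toFun := fun f =>
        { toFun := fun g => PhiAux K A B M N f g
          map_add' := fun g g' => LinearMap.ext fun t => by
            simp only [PhiAux_apply, LinearMap.add_apply, LinearMap.restrictScalars_add,
              TensorProduct.map_add_right]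
          map_smul' := fun k g => LinearMap.ext fun t => by
            simp only [PhiAux_apply, LinearMap.smul_apply, RingHom.id_apply,
              LinearMap.restrictScalars_smul, TensorProduct.map_smul_right] }
      map_add' := fun f f' => LinearMap.ext fun g => LinearMap.ext fun t => by
        simp only [LinearMap.coe_mk, AddHom.coe_mk, PhiAux_apply, LinearMap.add_apply,
          LinearMap.restrictScalars_add, TensorProduct.map_add_left]
      map_smul' := fun k f => LinearMap.ext fun g => LinearMap.ext fun t => by
        simp only [LinearMap.coe_mk, AddHom.coe_mk, PhiAux_apply, LinearMap.smul_apply,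
          RingHom.id_apply, LinearMap.restrictScalars_smul, TensorProduct.map_smul_left] }

theorem Phi_tmul (f : M →ₗ[A] A) (g : N →ₗ[B] B) (m : M) (n : N) :
    Phi K A B M N (f ⊗ₜ[K] g) (m ⊗ₜ[K] n) = f m ⊗ₜ[K] g n := by
  simp only [Phi]
  rw [TensorProduct.lift.tmul]
  rfl

set_option linter.unusedSectionVars false

variable [FiniteDimensional K A] [FiniteDimensional K B]

/-- Coordinate projection `A ⊗ B → B` along the `i`-th basis vector of `A`. -/
noncomputable def projA (i : Fin (Module.finrank K A)) : A ⊗[K] B →ₗ[K] B :=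
  (TensorProduct.lid K B).toLinearMap ∘ₗ LinearMap.rTensor B ((Module.finBasis K A).coord i)

theorem projA_tmul (i : Fin (Module.finrank K A)) (a : A) (b : B) :
    projA K A B i (a ⊗ₜ[K] b) = ((Module.finBasis K A).coord i) a • b := by
  simp [projA]

theorem sum_projA (z : A ⊗[K] B) :
    ∑ i, (Module.finBasis K A) i ⊗ₜ[K] projA K A B i z = z := by
  induction z using TensorProduct.induction_on with
  | zero => simp
  | tmul a b =>
    have : ∀ i : Fin (Module.finrank K A),
        (Module.finBasis K A) i ⊗ₜ[K] projA K A B i (a ⊗ₜ[K] b) =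
          (((Module.finBasis K A).repr a i) • (Module.finBasis K A) i) ⊗ₜ[K] b := by
      intro i
      rw [projA_tmul, Module.Basis.coord_apply, TensorProduct.tmul_smul, TensorProduct.smul_tmul']
    rw [Finset.sum_congr rfl fun i _ => this i, ← TensorProduct.sum_tmul,
      Module.Basis.sum_repr]
  | add z₁ z₂ h₁ h₂ =>
    simp only [map_add, TensorProduct.tmul_add]
    rw [Finset.sum_add_distrib, h₁, h₂]

theorem projA_one_mul (i : Fin (Module.finrank K A)) (b : B) (z : A ⊗[K] B) :
    projA K A B i ((1 ⊗ₜ[K] b) * z) = b * projA K A B i z := by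
  induction z using TensorProduct.induction_on with
  | zero => simp
  | tmul a b' =>
    rw [Algebra.TensorProduct.tmul_mul_tmul, one_mul, projA_tmul, projA_tmul,
      mul_smul_comm]
  | add z₁ z₂ h₁ h₂ => rw [mul_add, map_add, map_add, mul_add, h₁, h₂]

/-- Extensionality for `A ⊗ B`-linear maps out of `M ⊗ N` on pure tensors. -/
theorem D1_ext {φ ψ : letI := tensorModule K A B M N
      (M ⊗[K] N) →ₗ[A ⊗[K] B] (A ⊗[K] B)}
    (h : ∀ (m : M) (n : N), φ (m ⊗ₜ[K] n) = ψ (m ⊗ₜ[K] n)) : φ = ψ := by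
  letI := tensorModule K A B M N
  ext t
  induction t using TensorProduct.induction_on with
  | zero => rw [map_zero, map_zero]
  | tmul m n => exact h m n
  | add t₁ t₂ h₁ h₂ => rw [map_add, map_add, h₁, h₂]

section Engine

variable [FiniteDimensional K N]

theorem fd_dual : FiniteDimensional K (N →ₗ[B] B) :=
  FiniteDimensional.of_injective (LinearMap.restrictScalarsₗ K B N B K)
    (LinearMap.restrictScalars_injective K)

variable {K A B M N}

/-- The `B`-linear map `n ↦ pᵢ (φ (m ⊗ n))`. -/
noncomputable def Gphi
    (φ : letI := tensorModule K A B M N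
      (M ⊗[K] N) →ₗ[A ⊗[K] B] (A ⊗[K] B))
    (i : Fin (Module.finrank K A)) (m : M) : N →ₗ[B] B where
  toFun n := projA K A B i (φ (m ⊗ₜ[K] n))
  map_add' n n' := by
    rw [TensorProduct.tmul_add, map_add, map_add]
  map_smul' b n := by
    letI := tensorModule K A B M N
    have h1 : m ⊗ₜ[K] (b • n) = ((1 : A) ⊗ₜ[K] b) • (m ⊗ₜ[K] n) := by
      rw [tensorModule_smul_tmul, one_smul]
    rw [h1, LinearMap.map_smul, smul_eq_mul, projA_one_mul]
    rfl

theorem Gphi_apply (φ : letI := tensorModule K A B M N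
      (M ⊗[K] N) →ₗ[A ⊗[K] B] (A ⊗[K] B))
    (i : Fin (Module.finrank K A)) (m : M) (n : N) :
    Gphi φ i m n = projA K A B i (φ (m ⊗ₜ[K] n)) := rfl

theorem Gphi_reconstruct (φ : letI := tensorModule K A B M N
      (M ⊗[K] N) →ₗ[A ⊗[K] B] (A ⊗[K] B)) (m : M) (n : N) :
    ∑ i, (Module.finBasis K A) i ⊗ₜ[K] Gphi φ i m n = φ (m ⊗ₜ[K] n) :=
  sum_projA K A B _

theorem Gphi_smul (φ : letI := tensorModule K A B M N
      (M ⊗[K] N) →ₗ[A ⊗[K] B] (A ⊗[K] B))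
    (i : Fin (Module.finrank K A)) (a : A) (m : M) :
    Gphi φ i (a • m) = ∑ j, ((Module.finBasis K A).coord i
        (a * (Module.finBasis K A) j)) • Gphi φ j m := by
  letI := tensorModule K A B M N
  ext n
  have h1 : (a • m) ⊗ₜ[K] n = (a ⊗ₜ[K] (1 : B)) • (m ⊗ₜ[K] n) := by
    rw [tensorModule_smul_tmul, one_smul]
  have h2 : φ ((a ⊗ₜ[K] (1 : B)) • (m ⊗ₜ[K] n)) =
      (a ⊗ₜ[K] (1 : B)) * φ (m ⊗ₜ[K] n) := by
    rw [LinearMap.map_smul, smul_eq_mul]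
  rw [LinearMap.sum_apply, Gphi_apply, h1, h2, ← Gphi_reconstruct φ m n,
    Finset.mul_sum, map_sum]
  refine Finset.sum_congr rfl fun j _ => ?_
  rw [Algebra.TensorProduct.tmul_mul_tmul, one_mul, projA_tmul]
  rfl

theorem Gphi_add (φ : letI := tensorModule K A B M N
      (M ⊗[K] N) →ₗ[A ⊗[K] B] (A ⊗[K] B))
    (i : Fin (Module.finrank K A)) (m m' : M) :
    Gphi φ i (m + m') = Gphi φ i m + Gphi φ i m' := by
  ext n
  simp only [Gphi_apply, LinearMap.add_apply, TensorProduct.add_tmul, map_add]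

/-- The `A`-linear component map `m ↦ ∑ i, coordₖ(Gφᵢ(m)) eᵢ`. -/
noncomputable def Fphi (φ : letI := tensorModule K A B M N
      (M ⊗[K] N) →ₗ[A ⊗[K] B] (A ⊗[K] B))
    (k : Fin (letI := fd_dual K B N; Module.finrank K (N →ₗ[B] B))) : M →ₗ[A] A :=
  letI := fd_dual K B N
  { toFun := fun m => ∑ i, ((Module.finBasis K (N →ₗ[B] B)).coord k (Gphi φ i m)) •
      (Module.finBasis K A) i
    map_add' := fun m m' => by
      rw [← Finset.sum_add_distrib]
      refine Finset.sum_congr rfl fun i _ => ?_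
      rw [Gphi_add, map_add, add_smul]
    map_smul' := fun a m => by
      dsimp only [RingHom.id_apply]
      have : ∀ i, ((Module.finBasis K (N →ₗ[B] B)).coord k (Gphi φ i (a • m))) •
          (Module.finBasis K A) i =
          ∑ j, ((Module.finBasis K (N →ₗ[B] B)).coord k (Gphi φ j m)) •
            (((Module.finBasis K A).coord i (a * (Module.finBasis K A) j)) •
              (Module.finBasis K A) i) := by
        intro i
        rw [Gphi_smul, map_sum, Finset.sum_smul]
        refine Finset.sum_congr rfl fun j _ => ?_
        rw [map_smul, smul_eq_mul, mul_comm, mul_smul]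
      rw [Finset.sum_congr rfl fun i _ => this i, Finset.sum_comm]
      have h2 : ∀ j, ∑ i, ((Module.finBasis K (N →ₗ[B] B)).coord k (Gphi φ j m)) •
          (((Module.finBasis K A).coord i (a * (Module.finBasis K A) j)) •
            (Module.finBasis K A) i) =
          ((Module.finBasis K (N →ₗ[B] B)).coord k (Gphi φ j m)) •
            (a * (Module.finBasis K A) j) := by
        intro j
        rw [← Finset.smul_sum]
        congr 1
        have := Module.Basis.sum_repr (Module.finBasis K A) (a * (Module.finBasis K A) j)
        simpa only [Module.Basis.coord_apply] using this
      rw [Finset.sum_congr rfl fun j _ => h2 j, Finset.smul_sum]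
      refine Finset.sum_congr rfl fun j _ => ?_
      rw [smul_comm, smul_eq_mul] }

theorem Fphi_apply (φ : letI := tensorModule K A B M N
      (M ⊗[K] N) →ₗ[A ⊗[K] B] (A ⊗[K] B))
    (k : Fin (letI := fd_dual K B N; Module.finrank K (N →ₗ[B] B))) (m : M) :
    letI := fd_dual K B N
    Fphi φ k m = ∑ i, ((Module.finBasis K (N →ₗ[B] B)).coord k (Gphi φ i m)) •
      (Module.finBasis K A) i := rfl

/-- The inverse of `Phi`, defined using bases of `A` and of `N*`. -/
noncomputable def invPhi (φ : letI := tensorModule K A B M N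
      (M ⊗[K] N) →ₗ[A ⊗[K] B] (A ⊗[K] B)) :
    (M →ₗ[A] A) ⊗[K] (N →ₗ[B] B) :=
  letI := fd_dual K B N
  ∑ k, Fphi φ k ⊗ₜ[K] (Module.finBasis K (N →ₗ[B] B)) k

theorem Phi_invPhi (φ : letI := tensorModule K A B M N
      (M ⊗[K] N) →ₗ[A ⊗[K] B] (A ⊗[K] B)) :
    Phi K A B M N (invPhi φ) = φ := by
  letI := tensorModule K A B M N
  letI := fd_dual K B N
  refine D1_ext K A B M N fun m n => ?_
  rw [invPhi, map_sum, LinearMap.sum_apply]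
  have e1 : ∀ k, (Phi K A B M N (Fphi φ k ⊗ₜ[K] (Module.finBasis K (N →ₗ[B] B)) k))
      (m ⊗ₜ[K] n) = ∑ i, (Module.finBasis K A) i ⊗ₜ[K]
        (((Module.finBasis K (N →ₗ[B] B)).coord k (Gphi φ i m)) •
          (Module.finBasis K (N →ₗ[B] B)) k n) := by
    intro k
    rw [Phi_tmul, Fphi_apply, TensorProduct.sum_tmul]
    exact Finset.sum_congr rfl fun i _ => TensorProduct.smul_tmul _ _ _
  rw [Finset.sum_congr rfl fun k _ => e1 k, Finset.sum_comm]
  have e2 : ∀ i, ∑ k, (Module.finBasis K A) i ⊗ₜ[K]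
      (((Module.finBasis K (N →ₗ[B] B)).coord k (Gphi φ i m)) •
        (Module.finBasis K (N →ₗ[B] B)) k n) =
      (Module.finBasis K A) i ⊗ₜ[K] Gphi φ i m n := by
    intro i
    rw [← TensorProduct.tmul_sum]
    congr 1
    have e3 : ∑ k, ((Module.finBasis K (N →ₗ[B] B)).coord k (Gphi φ i m)) •
        (Module.finBasis K (N →ₗ[B] B)) k n =
        (∑ k, ((Module.finBasis K (N →ₗ[B] B)).coord k (Gphi φ i m)) •
          (Module.finBasis K (N →ₗ[B] B)) k) n := by
      rw [LinearMap.sum_apply]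
      exact Finset.sum_congr rfl fun k _ => rfl
    rw [e3]
    congr 1
    have := Module.Basis.sum_repr (Module.finBasis K (N →ₗ[B] B)) (Gphi φ i m)
    simpa only [Module.Basis.coord_apply] using this
  rw [Finset.sum_congr rfl fun i _ => e2 i]
  exact Gphi_reconstruct φ m n

theorem invPhi_Phi_tmul (f : M →ₗ[A] A) (g : N →ₗ[B] B) :
    invPhi (Phi K A B M N (f ⊗ₜ[K] g)) = f ⊗ₜ[K] g := by
  letI := tensorModule K A B M N
  letI := fd_dual K B N
  have hG : ∀ (i : Fin (Module.finrank K A)) (m : M),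
      Gphi (Phi K A B M N (f ⊗ₜ[K] g)) i m =
        ((Module.finBasis K A).coord i (f m)) • g := by
    intro i m
    ext n
    rw [Gphi_apply, Phi_tmul, projA_tmul]
    rfl
  have hF : ∀ k, Fphi (Phi K A B M N (f ⊗ₜ[K] g)) k =
      ((Module.finBasis K (N →ₗ[B] B)).coord k g) • f := by
    intro k
    ext m
    rw [Fphi_apply]
    have : ∀ i, ((Module.finBasis K (N →ₗ[B] B)).coord k
        (Gphi (Phi K A B M N (f ⊗ₜ[K] g)) i m)) • (Module.finBasis K A) i =
        ((Module.finBasis K (N →ₗ[B] B)).coord k g) •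
          (((Module.finBasis K A).coord i (f m)) • (Module.finBasis K A) i) := by
      intro i
      rw [hG, map_smul, smul_eq_mul, mul_comm, mul_smul]
    rw [Finset.sum_congr rfl fun i _ => this i, ← Finset.smul_sum]
    have := Module.Basis.sum_repr (Module.finBasis K A) (f m)
    simp only [Module.Basis.coord_apply]
    rw [show ∑ i, ((Module.finBasis K A).repr (f m)) i • (Module.finBasis K A) i
      = f m from this]
    rfl
  rw [invPhi, Finset.sum_congr rfl fun k _ => by rw [hF k]]
  have : ∀ k, (((Module.finBasis K (N →ₗ[B] B)).coord k g) • f) ⊗ₜ[K]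
      (Module.finBasis K (N →ₗ[B] B)) k =
      f ⊗ₜ[K] (((Module.finBasis K (N →ₗ[B] B)).coord k g) •
        (Module.finBasis K (N →ₗ[B] B)) k) :=
    fun k => TensorProduct.smul_tmul _ _ _
  rw [Finset.sum_congr rfl fun k _ => this k, ← TensorProduct.tmul_sum]
  congr 1
  have := Module.Basis.sum_repr (Module.finBasis K (N →ₗ[B] B)) g
  simpa only [Module.Basis.coord_apply] using this

theorem invPhi_add (φ ψ : letI := tensorModule K A B M N
      (M ⊗[K] N) →ₗ[A ⊗[K] B] (A ⊗[K] B)) :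
    invPhi (φ + ψ) = invPhi φ + invPhi ψ := by
  letI := tensorModule K A B M N
  letI := fd_dual K B N
  have hG : ∀ i m, Gphi (φ + ψ) i m = Gphi φ i m + Gphi ψ i m := by
    intro i m
    ext n
    simp only [Gphi_apply, LinearMap.add_apply, map_add]
  have hF : ∀ k, Fphi (φ + ψ) k = Fphi φ k + Fphi ψ k := by
    intro k
    ext m
    simp only [Fphi_apply, LinearMap.add_apply, hG, map_add, add_smul,
      Finset.sum_add_distrib]
  rw [invPhi, invPhi, invPhi, ← Finset.sum_add_distrib]
  exact Finset.sum_congr rfl fun k _ => by rw [hF, TensorProduct.add_tmul]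

theorem invPhi_zero : invPhi (0 : letI := tensorModule K A B M N
      (M ⊗[K] N) →ₗ[A ⊗[K] B] (A ⊗[K] B)) = 0 := by
  letI := fd_dual K B N
  have hG : ∀ i m, Gphi (0 : letI := tensorModule K A B M N
      (M ⊗[K] N) →ₗ[A ⊗[K] B] (A ⊗[K] B)) i m = 0 := by
    intro i m
    ext n
    simp only [Gphi_apply, LinearMap.zero_apply, map_zero]
  have hF : ∀ k, Fphi (0 : letI := tensorModule K A B M N
      (M ⊗[K] N) →ₗ[A ⊗[K] B] (A ⊗[K] B)) k = 0 := by
    intro k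
    ext m
    simp only [Fphi_apply, hG, map_zero, zero_smul, Finset.sum_const_zero]
    rfl
  rw [invPhi, Finset.sum_congr rfl fun k _ => by rw [hF k]]
  simp

theorem invPhi_Phi (x : (M →ₗ[A] A) ⊗[K] (N →ₗ[B] B)) :
    invPhi (Phi K A B M N x) = x := by
  letI := tensorModule K A B M N
  induction x using TensorProduct.induction_on with
  | zero => rw [map_zero, invPhi_zero]
  | tmul f g => exact invPhi_Phi_tmul f g
  | add x y hx hy => rw [map_add, invPhi_add, hx, hy]

theorem Phi_bijective : Function.Bijective ⇑(Phi K A B M N) :=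
  ⟨fun x y h => by rw [← invPhi_Phi (K := K) x, h, invPhi_Phi],
    fun φ => ⟨invPhi φ, Phi_invPhi φ⟩⟩

end Engine

section Glue

theorem Phi_equivariant (y : Aᵐᵒᵖ ⊗[K] Bᵐᵒᵖ) (x : (M →ₗ[A] A) ⊗[K] (N →ₗ[B] B)) :
    letI := tensorModule K A B M N
    letI := tensorModule K Aᵐᵒᵖ Bᵐᵒᵖ (M →ₗ[A] A) (N →ₗ[B] B)
    Phi K A B M N (y • x) =
      (Algebra.TensorProduct.opAlgEquiv K K A B y) • Phi K A B M N x := by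
  letI := tensorModule K A B M N
  letI := tensorModule K Aᵐᵒᵖ Bᵐᵒᵖ (M →ₗ[A] A) (N →ₗ[B] B)
  induction y using TensorProduct.induction_on with
  | zero => rw [zero_smul (Aᵐᵒᵖ ⊗[K] Bᵐᵒᵖ) x, map_zero, map_zero, zero_smul]
  | tmul a b =>
    induction x using TensorProduct.induction_on with
    | zero => rw [smul_zero, map_zero, smul_zero]
    | tmul f g =>
      rw [tensorModule_smul_tmul]
      refine D1_ext K A B M N fun m n => ?_
      simp only [Phi_tmul, LinearMap.smul_apply, Algebra.TensorProduct.opAlgEquiv_tmul,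
        MulOpposite.smul_eq_mul_unop, MulOpposite.unop_op,
        Algebra.TensorProduct.tmul_mul_tmul]
    | add x₁ x₂ h₁ h₂ => rw [smul_add, map_add, map_add, smul_add, h₁, h₂]
  | add y₁ y₂ h₁ h₂ => rw [add_smul, map_add, map_add, add_smul, h₁, h₂]

/-- The `K`-linear "double op" equivalence `A ⊗ B ≃ Aᵐᵒᵖ ⊗ Bᵐᵒᵖ`. -/
noncomputable def tauEquiv : (A ⊗[K] B) ≃ₗ[K] (Aᵐᵒᵖ ⊗[K] Bᵐᵒᵖ) :=
  TensorProduct.congr (MulOpposite.opLinearEquiv K) (MulOpposite.opLinearEquiv K)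

theorem tauEquiv_tmul (a : A) (b : B) :
    tauEquiv K A B (a ⊗ₜ[K] b) = MulOpposite.op a ⊗ₜ[K] MulOpposite.op b := rfl

theorem tauEquiv_antimul (z w : A ⊗[K] B) :
    tauEquiv K A B (z * w) = tauEquiv K A B w * tauEquiv K A B z := by
  induction z using TensorProduct.induction_on with
  | zero => rw [zero_mul, LinearEquiv.map_zero, mul_zero]
  | tmul a b =>
    induction w using TensorProduct.induction_on with
    | zero => rw [mul_zero, LinearEquiv.map_zero, zero_mul]
    | tmul a' b' =>
      rw [Algebra.TensorProduct.tmul_mul_tmul, tauEquiv_tmul, tauEquiv_tmul,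
        tauEquiv_tmul, Algebra.TensorProduct.tmul_mul_tmul]
      rfl
    | add w₁ w₂ h₁ h₂ => rw [mul_add, map_add, map_add, h₁, h₂, add_mul]
  | add z₁ z₂ h₁ h₂ => rw [add_mul, map_add, map_add, h₁, h₂, mul_add]

theorem sigma_tauEquiv (z : A ⊗[K] B) :
    Algebra.TensorProduct.opAlgEquiv K K A B (tauEquiv K A B z) =
      MulOpposite.op z := by
  induction z using TensorProduct.induction_on with
  | zero => rw [LinearEquiv.map_zero, map_zero]; rfl
  | tmul a b => rw [tauEquiv_tmul, Algebra.TensorProduct.opAlgEquiv_tmul]; rfl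
  | add z₁ z₂ h₁ h₂ =>
    rw [map_add, map_add, h₁, h₂, MulOpposite.op_add]

theorem tauEquiv_unop_sigma (y : Aᵐᵒᵖ ⊗[K] Bᵐᵒᵖ) :
    tauEquiv K A B (Algebra.TensorProduct.opAlgEquiv K K A B y).unop = y :=
  (Algebra.TensorProduct.opAlgEquiv K K A B).injective
    (by rw [sigma_tauEquiv, MulOpposite.op_unop])

/-- `A ≃ Aᵐᵒᵖ` as an equivalence of left `Aᵐᵒᵖ`-modules. -/
noncomputable def opAEquiv : A ≃ₗ[Aᵐᵒᵖ] Aᵐᵒᵖ where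
  toFun := MulOpposite.op
  invFun := MulOpposite.unop
  map_add' := fun x y => rfl
  map_smul' := fun y x => by
    simp only [RingHom.id_apply, MulOpposite.smul_eq_mul_unop]
    rfl
  left_inv := fun x => rfl
  right_inv := fun x => rfl

/-- Postcomposition with `op` as a `K`-linear equivalence between the two versions of
the double dual. -/
noncomputable def thetaEquiv :
    ((M →ₗ[A] A) →ₗ[Aᵐᵒᵖ] A) ≃ₗ[K] ((M →ₗ[A] A) →ₗ[Aᵐᵒᵖ] Aᵐᵒᵖ) where
  toFun μ := (opAEquiv A).toLinearMap ∘ₗ μ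
  invFun ν := (opAEquiv A).symm.toLinearMap ∘ₗ ν
  map_add' μ μ' := by ext f; rfl
  map_smul' k μ := by ext f; exact MulOpposite.op_smul k (μ f)
  left_inv μ := by ext f; rfl
  right_inv ν := by ext f; rfl

theorem thetaEquiv_apply (μ : (M →ₗ[A] A) →ₗ[Aᵐᵒᵖ] A) (f : M →ₗ[A] A) :
    thetaEquiv K A M μ f = MulOpposite.op (μ f) := rfl

/-- The evaluation map `M → M**` as a `K`-linear map. -/
noncomputable def dualEvalK : M →ₗ[K] ((M →ₗ[A] A) →ₗ[Aᵐᵒᵖ] A) where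
  toFun := dualEval A M
  map_add' m m' := map_add (dualEval A M) m m'
  map_smul' k m := by
    refine LinearMap.ext fun f => ?_
    show f (k • m) = k • f m
    rw [← algebraMap_smul A k m, LinearMap.map_smul, algebraMap_smul]

/-- The composite `M ⊗ N → M** ⊗ N**` (op-adjusted), `K`-linearly. -/
noncomputable def OmegaL : (M ⊗[K] N) →ₗ[K]
    (((M →ₗ[A] A) →ₗ[Aᵐᵒᵖ] Aᵐᵒᵖ) ⊗[K] ((N →ₗ[B] B) →ₗ[Bᵐᵒᵖ] Bᵐᵒᵖ)) :=
  TensorProduct.map ((thetaEquiv K A M).toLinearMap ∘ₗ dualEvalK K A M)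
    ((thetaEquiv K B N).toLinearMap ∘ₗ dualEvalK K B N)

theorem key_identity (t : M ⊗[K] N) (u : (M →ₗ[A] A) ⊗[K] (N →ₗ[B] B)) :
    letI := tensorModule K A B M N
    letI := tensorModule K Aᵐᵒᵖ Bᵐᵒᵖ (M →ₗ[A] A) (N →ₗ[B] B)
    Phi K Aᵐᵒᵖ Bᵐᵒᵖ (M →ₗ[A] A) (N →ₗ[B] B) (OmegaL K A B M N t) u =
      tauEquiv K A B (Phi K A B M N u t) := by
  letI := tensorModule K A B M N
  letI := tensorModule K Aᵐᵒᵖ Bᵐᵒᵖ (M →ₗ[A] A) (N →ₗ[B] B)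
  induction t using TensorProduct.induction_on with
  | zero =>
    rw [map_zero, map_zero, LinearMap.zero_apply]
    rw [show (Phi K A B M N u) 0 = 0 from map_zero _, LinearEquiv.map_zero]
  | tmul m n =>
    induction u using TensorProduct.induction_on with
    | zero =>
      rw [map_zero, map_zero (Phi K A B M N), LinearMap.zero_apply,
        LinearEquiv.map_zero]
    | tmul f g =>
      have h1 : OmegaL K A B M N (m ⊗ₜ[K] n) =
          (thetaEquiv K A M (dualEvalK K A M m)) ⊗ₜ[K]
            (thetaEquiv K B N (dualEvalK K B N n)) := rfl
      rw [h1, Phi_tmul, Phi_tmul, thetaEquiv_apply, thetaEquiv_apply, tauEquiv_tmul]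
      rfl
    | add u₁ u₂ h₁ h₂ =>
      rw [map_add, h₁, h₂, map_add (Phi K A B M N) u₁ u₂, LinearMap.add_apply,
        LinearEquiv.map_add]
  | add t₁ t₂ h₁ h₂ =>
    rw [map_add, map_add, LinearMap.add_apply, h₁, h₂]
    rw [show (Phi K A B M N u) (t₁ + t₂) = (Phi K A B M N u) t₁ + (Phi K A B M N u) t₂
      from map_add _ _ _, LinearEquiv.map_add]

end Glue

end Aux

theorem tensor_reflexive'
    (K : Type u) [Field K]
    (A : Type u) [Ring A] [Algebra K A] [FiniteDimensional K A]
    (B : Type u) [Ring B] [Algebra K B] [FiniteDimensional K B]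
    (M : Type u) [AddCommGroup M] [Module K M] [Module A M] [IsScalarTower K A M]
    [Module.Finite A M]
    (N : Type u) [AddCommGroup N] [Module K N] [Module B N] [IsScalarTower K B N]
    [Module.Finite B N]
    (hM : Function.Bijective (dualEval A M)) (hN : Function.Bijective (dualEval B N)) :
    let _i : Module (A ⊗[K] B) (M ⊗[K] N) := tensorModule K A B M N
    Function.Bijective (dualEval (A ⊗[K] B) (M ⊗[K] N)) := by
  intro _i
  classical
  haveI : Module.Finite K M := Module.Finite.trans A M
  haveI : Module.Finite K N := Module.Finite.trans B N
  haveI : FiniteDimensional K (M →ₗ[A] A) := fd_dual K A M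
  haveI : FiniteDimensional K (N →ₗ[B] B) := fd_dual K B N
  letI := tensorModule K A B M N
  letI := tensorModule K Aᵐᵒᵖ Bᵐᵒᵖ (M →ₗ[A] A) (N →ₗ[B] B)
  have hPhi : Function.Bijective ⇑(Phi K A B M N) := Phi_bijective
  have hPhi' : Function.Bijective
      ⇑(Phi K Aᵐᵒᵖ Bᵐᵒᵖ (M →ₗ[A] A) (N →ₗ[B] B)) := Phi_bijective
  have hThM : Function.Bijective
      ⇑((thetaEquiv K A M).toLinearMap ∘ₗ dualEvalK K A M) := by
    rw [LinearMap.coe_comp]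
    exact (thetaEquiv K A M).bijective.comp hM
  have hThN : Function.Bijective
      ⇑((thetaEquiv K B N).toLinearMap ∘ₗ dualEvalK K B N) := by
    rw [LinearMap.coe_comp]
    exact (thetaEquiv K B N).bijective.comp hN
  have hOmega : Function.Bijective ⇑(OmegaL K A B M N) :=
    (TensorProduct.congr (LinearEquiv.ofBijective _ hThM)
      (LinearEquiv.ofBijective _ hThN)).bijective
  constructor
  · intro t t' h
    have h2 : ∀ u, Phi K A B M N u t = Phi K A B M N u t' := fun u =>
      congrArg (fun ν => ν (Phi K A B M N u)) h
    have h3 : Phi K Aᵐᵒᵖ Bᵐᵒᵖ (M →ₗ[A] A) (N →ₗ[B] B) (OmegaL K A B M N t) =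
        Phi K Aᵐᵒᵖ Bᵐᵒᵖ (M →ₗ[A] A) (N →ₗ[B] B) (OmegaL K A B M N t') :=
      LinearMap.ext fun u => by
        rw [key_identity, key_identity, h2 u]
    exact hOmega.injective (hPhi'.injective h3)
  · intro χ
    let χ' : ((M →ₗ[A] A) ⊗[K] (N →ₗ[B] B)) →ₗ[Aᵐᵒᵖ ⊗[K] Bᵐᵒᵖ]
        (Aᵐᵒᵖ ⊗[K] Bᵐᵒᵖ) :=
      { toFun := fun u => tauEquiv K A B (χ (Phi K A B M N u))
        map_add' := fun u u' => by
          rw [map_add (Phi K A B M N), map_add, LinearEquiv.map_add]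
        map_smul' := fun y u => by
          dsimp only [RingHom.id_apply]
          rw [Phi_equivariant, LinearMap.map_smul, MulOpposite.smul_eq_mul_unop,
            tauEquiv_antimul, tauEquiv_unop_sigma, smul_eq_mul] }
    obtain ⟨x, hx⟩ := hPhi'.surjective χ'
    obtain ⟨t, ht⟩ := hOmega.surjective x
    refine ⟨t, LinearMap.ext fun φ => ?_⟩
    obtain ⟨u, rfl⟩ := hPhi.surjective φ
    show Phi K A B M N u t = χ (Phi K A B M N u)
    have h5 : tauEquiv K A B (Phi K A B M N u t) =
        tauEquiv K A B (χ (Phi K A B M N u)) := by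
      rw [← key_identity, ht, hx]
      rfl
    exact (tauEquiv K A B).injective h5
/-- **Step (3) of the proof of Proposition 3.1.** If `M ∈ mod A` and `N ∈ mod B` are
reflexive (the evaluation maps `M → M**` and `N → N**` are isomorphisms), then
`M ⊗[K] N` is a reflexive `A ⊗[K] B`-module. -/
theorem tensor_reflexive
    (K : Type u) [Field K] [IsAlgClosed K]
    (A : Type u) [Ring A] [Algebra K A] [FiniteDimensional K A]
    (B : Type u) [Ring B] [Algebra K B] [FiniteDimensional K B]
    (M : Type u) [AddCommGroup M] [Module K M] [Module A M] [IsScalarTower K A M]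
    [Module.Finite A M]
    (N : Type u) [AddCommGroup N] [Module K N] [Module B N] [IsScalarTower K B N]
    [Module.Finite B N]
    (hM : Function.Bijective (dualEval A M)) (hN : Function.Bijective (dualEval B N)) :
    let _i : Module (A ⊗[K] B) (M ⊗[K] N) := tensorModule K A B M N
    Function.Bijective (dualEval (A ⊗[K] B) (M ⊗[K] N)) := by
  exact tensor_reflexive' K A B M N hM hN
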